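/- Let ε < 1/3, P₀ = N(0, I_p), and define the depth region L(η, P₀) = {Γ ≻ 0 : D(Γ, P₀) ≥ 1/2 - η}. Then L(ε/(1-ε), P₀) = {Γ ≻ 0 : 1/2 + ε/(1-ε) ≥ g(v₁) ≥ g(v_p) ≥ 1/2 - ε/(1-ε)}, where g(v_j) = 2Φ(√l_j) - 1 and l₁, l_p are the largest and smallest eigenvalues of Γ with eigenvectors v₁, v_p. Consequently, for Γ ∈ L(ε/(1-ε), P₀), the operator norm of Γ is at most [Φ⁻¹((3-ε)/(4(1-ε)))]² and the operator norm of Γ⁻¹ is at most 1/[Φ⁻¹((3-5ε)/(4(1-ε)))]². -/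

import Mathlib

open MeasureTheory ProbabilityTheory

/-- The standard normal cumulative distribution function. -/
noncomputable def Phi (x : ℝ) : ℝ := ((gaussianReal 0 1) (Set.Iic x)).toReal

/-- The inverse of the standard normal CDF. -/
noncomputable def PhiInv : ℝ → ℝ := Function.invFun Phi

section PhiAux
open Filter

lemma f_int : Integrable (gaussianPDFReal 0 1) := integrable_gaussianPDFReal 0 1

lemma Phi_eq (x : ℝ) : Phi x = ∫ t in Set.Iic x, gaussianPDFReal 0 1 t := by
  rw [Phi, gaussianReal_apply_eq_integral 0 one_ne_zero, ENNReal.toReal_ofReal]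
  exact setIntegral_nonneg measurableSet_Iic fun t _ => gaussianPDFReal_nonneg 0 1 t

lemma Phi_add {a b : ℝ} (hab : a ≤ b) :
    Phi b = Phi a + ∫ t in Set.Ioc a b, gaussianPDFReal 0 1 t := by
  rw [Phi_eq, Phi_eq, ← Set.Iic_union_Ioc_eq_Iic hab,
    setIntegral_union (Set.Iic_disjoint_Ioc le_rfl) measurableSet_Ioc
      f_int.integrableOn f_int.integrableOn]

lemma Phi_strictMono : StrictMono Phi := by
  intro a b hab
  rw [Phi_add hab.le, lt_add_iff_pos_right]
  rw [setIntegral_pos_iff_support_of_nonneg_ae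
    (ae_of_all _ fun t => gaussianPDFReal_nonneg 0 1 t) f_int.integrableOn]
  have : Function.support (gaussianPDFReal 0 1) = Set.univ := by
    ext t; simp [Function.mem_support, (gaussianPDFReal_pos 0 1 t one_ne_zero).ne']
  rw [this, Set.univ_inter, Real.volume_Ioc]
  simp [hab]

lemma Phi_continuous : Continuous Phi := by
  have h : ∀ x, Phi x = Phi 0 + ∫ t in (0:ℝ)..x, gaussianPDFReal 0 1 t := by
    intro x
    rcases le_or_gt 0 x with hx | hx
    · rw [intervalIntegral.integral_of_le hx, ← Phi_add hx]
    · rw [intervalIntegral.integral_of_ge hx.le]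
      have h := Phi_add hx.le (a := x) (b := 0)
      linarith
  have heq : Phi = fun x => Phi 0 + ∫ t in (0:ℝ)..x, gaussianPDFReal 0 1 t := funext h
  rw [heq]
  exact continuous_const.add (f_int.continuous_primitive 0)

lemma Phi_tendsto_atTop : Tendsto Phi atTop (nhds 1) := by
  have h := (ENNReal.tendsto_toReal (a := (gaussianReal 0 1) Set.univ)
      (by simp [measure_univ])).comp
    (tendsto_measure_Iic_atTop (gaussianReal 0 1))
  show Tendsto (fun x => ((gaussianReal 0 1) (Set.Iic x)).toReal) atTop (nhds 1)
  simpa [measure_univ, Function.comp_def] using h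

lemma Phi_zero : Phi 0 = 1 / 2 := by
  have heven : ∀ t : ℝ, gaussianPDFReal 0 1 (-t) = gaussianPDFReal 0 1 t := by
    intro t; simp [gaussianPDFReal, neg_sq]
  have h1 : ∫ t in Set.Iic (0:ℝ), gaussianPDFReal 0 1 t
      = ∫ t in Set.Ioi (0:ℝ), gaussianPDFReal 0 1 t := by
    have h := integral_comp_neg_Iic 0 (gaussianPDFReal 0 1)
    simp_rw [heven, neg_zero] at h
    exact h
  have h2 : (∫ t in Set.Iic (0:ℝ), gaussianPDFReal 0 1 t)
      + ∫ t in Set.Ioi (0:ℝ), gaussianPDFReal 0 1 t = 1 := by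
    rw [← setIntegral_union (Set.Iic_disjoint_Ioi le_rfl) measurableSet_Ioi
      f_int.integrableOn f_int.integrableOn, Set.Iic_union_Ioi,
      setIntegral_univ, integral_gaussianPDFReal_eq_one 0 one_ne_zero]
  rw [Phi_eq]; linarith

lemma exists_Phi_eq {q : ℝ} (hq : 1 / 2 ≤ q) (hq1 : q < 1) : ∃ x, Phi x = q := by
  obtain ⟨b, hb0, hb⟩ : ∃ b : ℝ, 0 ≤ b ∧ q < Phi b := by
    have := (Phi_tendsto_atTop.eventually (eventually_gt_nhds hq1)).and
      (eventually_ge_atTop (0:ℝ))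
    obtain ⟨b, h1, h2⟩ := this.exists
    exact ⟨b, h2, h1⟩
  have := intermediate_value_Icc hb0 Phi_continuous.continuousOn
  have hmem : q ∈ Set.Icc (Phi 0) (Phi b) := ⟨Phi_zero ▸ hq, hb.le⟩
  obtain ⟨x, _, hx⟩ := this hmem
  exact ⟨x, hx⟩

lemma Phi_PhiInv {q : ℝ} (hq : 1 / 2 ≤ q) (hq1 : q < 1) : Phi (PhiInv q) = q :=
  Function.invFun_eq (exists_Phi_eq hq hq1)

lemma PhiInv_nonneg {q : ℝ} (hq : 1 / 2 ≤ q) (hq1 : q < 1) : 0 ≤ PhiInv q := by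
  have h := Phi_PhiInv hq hq1
  by_contra hneg
  have := Phi_strictMono (lt_of_not_ge hneg)
  rw [h, Phi_zero] at this
  linarith

end PhiAux

/-- For `ε < 1/3`, a positive definite matrix with extreme eigenvalues `l₁ ≥ l_p > 0` lies
in the depth region `L(ε/(1-ε), P₀) = {Γ : D(Γ,P₀) ≥ 1/2 - ε/(1-ε)}` (where
`D(Γ,P₀) = min{2Φ(√l_p)-1, 2(1-Φ(√l₁))}`) if and only if
`1/2 + ε/(1-ε) ≥ 2Φ(√l₁)-1 ≥ 2Φ(√l_p)-1 ≥ 1/2 - ε/(1-ε)`; consequently such matrices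
satisfy `l₁ ≤ [Φ⁻¹((3-ε)/(4(1-ε)))]²` and `l_p ≥ [Φ⁻¹((3-5ε)/(4(1-ε)))]²`. -/
theorem depth_region_characterization (ε l₁ lp : ℝ)
    (hε0 : 0 ≤ ε) (hε : ε < 1 / 3) (hlp : 0 < lp) (hle : lp ≤ l₁) :
    ((min (2 * Phi (Real.sqrt lp) - 1) (2 * (1 - Phi (Real.sqrt l₁))) ≥
        1 / 2 - ε / (1 - ε)) ↔
      (1 / 2 + ε / (1 - ε) ≥ 2 * Phi (Real.sqrt l₁) - 1 ∧
        2 * Phi (Real.sqrt l₁) - 1 ≥ 2 * Phi (Real.sqrt lp) - 1 ∧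
        2 * Phi (Real.sqrt lp) - 1 ≥ 1 / 2 - ε / (1 - ε))) ∧
    ((min (2 * Phi (Real.sqrt lp) - 1) (2 * (1 - Phi (Real.sqrt l₁))) ≥
        1 / 2 - ε / (1 - ε)) →
      l₁ ≤ (PhiInv ((3 - ε) / (4 * (1 - ε)))) ^ 2 ∧
        (PhiInv ((3 - 5 * ε) / (4 * (1 - ε)))) ^ 2 ≤ lp) := by
  have h1ε : (0:ℝ) < 1 - ε := by linarith
  set η := ε / (1 - ε) with hη_def
  have hη0 : 0 ≤ η := div_nonneg hε0 h1ε.le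
  have hη : η < 1 / 2 := by rw [hη_def, div_lt_iff₀ h1ε]; linarith
  have hAB : Phi (Real.sqrt lp) ≤ Phi (Real.sqrt l₁) :=
    Phi_strictMono.monotone (Real.sqrt_le_sqrt hle)
  constructor
  · constructor
    · intro h
      rw [ge_iff_le, le_min_iff] at h
      obtain ⟨h1, h2⟩ := h
      exact ⟨by linarith, by linarith, h1⟩
    · rintro ⟨h1, h2, h3⟩
      rw [ge_iff_le, le_min_iff]
      exact ⟨h3, by linarith⟩
  · intro h
    rw [ge_iff_le, le_min_iff] at h
    obtain ⟨h1, h2⟩ := h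
    constructor
    · set q₁ := (3 - ε) / (4 * (1 - ε)) with hq₁_def
      have hq₁ : 1 / 2 ≤ q₁ := by
        rw [hq₁_def, le_div_iff₀ (by linarith)]; linarith
      have hq₁1 : q₁ < 1 := by
        rw [hq₁_def, div_lt_one (by linarith)]; linarith
      have hq₁eq : q₁ = 3 / 4 + η / 2 := by
        rw [hq₁_def, hη_def]; field_simp; ring
      have hPhile : Phi (Real.sqrt l₁) ≤ q₁ := by rw [hq₁eq]; linarith
      have hPI := Phi_PhiInv hq₁ hq₁1
      have hle1 : Real.sqrt l₁ ≤ PhiInv q₁ := by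
        by_contra hc
        push_neg at hc
        have := Phi_strictMono hc
        rw [hPI] at this
        linarith
      calc l₁ = (Real.sqrt l₁) ^ 2 := (Real.sq_sqrt (by linarith)).symm
        _ ≤ (PhiInv q₁) ^ 2 := pow_le_pow_left₀ (Real.sqrt_nonneg _) hle1 2
    · set q₂ := (3 - 5 * ε) / (4 * (1 - ε)) with hq₂_def
      have hq₂ : 1 / 2 ≤ q₂ := by
        rw [hq₂_def, le_div_iff₀ (by linarith)]; linarith
      have hq₂1 : q₂ < 1 := by
        rw [hq₂_def, div_lt_one (by linarith)]; linarith
      have hq₂eq : q₂ = 3 / 4 - η / 2 := by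
        rw [hq₂_def, hη_def]; field_simp; ring
      have hPhige : q₂ ≤ Phi (Real.sqrt lp) := by rw [hq₂eq]; linarith
      have hPI := Phi_PhiInv hq₂ hq₂1
      have hle2 : PhiInv q₂ ≤ Real.sqrt lp := by
        by_contra hc
        push_neg at hc
        have := Phi_strictMono hc
        rw [hPI] at this
        linarith
      calc (PhiInv q₂) ^ 2 ≤ (Real.sqrt lp) ^ 2 :=
            pow_le_pow_left₀ (PhiInv_nonneg hq₂ hq₂1) hle2 2
        _ = lp := Real.sq_sqrt hlp.le
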